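/- Let B be a normed vector space, p ≥ 1, n ≥ 2, and b₁,…,bₙ ∈ B. Let X₁,…,Xₙ be i.i.d. random signs with P(Xᵢ=1)=P(Xᵢ=-1)=1/2. Then there exists a constant C_p depending only on p (independent of n, B and the bᵢ) such that E[‖∑ᵢ bᵢXᵢ‖^p] ≤ C_p · (E[‖∑ᵢ bᵢXᵢ‖])^p. In particular one may take C_p = 2^{p-1} · p! -style constants; the proof gives E[Z^k]^{1/k} ≤ 2^{1-1/k} E[Z] for integer k, where Z = ‖∑ᵢ bᵢXᵢ‖. -/

import Mathlib

open Finset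

namespace KK

noncomputable def sgn (b : Bool) : ℝ := if b then 1 else -1
lemma sgn_true : sgn true = 1 := rfl
lemma sgn_false : sgn false = -1 := rfl

noncomputable def K (ρ : ℝ) (n : ℕ) (x y : Fin n → Bool) : ℝ :=
  ∏ i, (1 + ρ * sgn (x i) * sgn (y i))

lemma K_nonneg {ρ : ℝ} (hρ0 : 0 ≤ ρ) (hρ1 : ρ ≤ 1) (n : ℕ) (x y : Fin n → Bool) :
    0 ≤ K ρ n x y := by
  refine Finset.prod_nonneg fun i _ => ?_
  cases x i <;> cases y i <;> simp [sgn] <;> nlinarith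

noncomputable def T (ρ : ℝ) (n : ℕ) (g : (Fin n → Bool) → ℝ) (x : Fin n → Bool) : ℝ :=
  (1/2^n) * ∑ y, K ρ n x y * g y

noncomputable def Ex (n : ℕ) (f : (Fin n → Bool) → ℝ) : ℝ := (1/2^n) * ∑ x, f x

lemma Ex_nonneg {n : ℕ} {f : (Fin n → Bool) → ℝ} (hf : ∀ x, 0 ≤ f x) : 0 ≤ Ex n f := by
  have h2 : (0:ℝ) < 1/2^n := by positivity
  exact mul_nonneg h2.le (Finset.sum_nonneg fun x _ => hf x)

lemma Ex_mono {n : ℕ} {f g : (Fin n → Bool) → ℝ} (h : ∀ x, f x ≤ g x) : Ex n f ≤ Ex n g := by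
  have h2 : (0:ℝ) < 1/2^n := by positivity
  exact mul_le_mul_of_nonneg_left (Finset.sum_le_sum fun x _ => h x) h2.le

lemma Ex_add {n : ℕ} (f g : (Fin n → Bool) → ℝ) :
    Ex n (fun x => f x + g x) = Ex n f + Ex n g := by
  unfold Ex
  rw [Finset.sum_add_distrib, mul_add]

lemma sum_cube_succ {n : ℕ} (f : (Fin (n+1) → Bool) → ℝ) :
    ∑ y, f y = ∑ x : Fin n → Bool, (f (Fin.cons true x) + f (Fin.cons false x)) := by
  rw [← (Fin.consEquiv (fun _ : Fin (n+1) => Bool)).sum_comp f]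
  rw [Fintype.sum_prod_type, Fintype.sum_bool]
  rw [← Finset.sum_add_distrib]
  rfl

lemma Ex_succ {n : ℕ} (f : (Fin (n+1) → Bool) → ℝ) :
    Ex (n+1) f = Ex n (fun x => (f (Fin.cons true x) + f (Fin.cons false x))/2) := by
  unfold Ex
  rw [sum_cube_succ, Finset.mul_sum, Finset.mul_sum]
  refine Finset.sum_congr rfl fun x _ => ?_
  ring

lemma K_succ (ρ : ℝ) {n : ℕ} (e d : Bool) (x y : Fin n → Bool) :
    K ρ (n+1) (Fin.cons e x) (Fin.cons d y) = (1 + ρ * sgn e * sgn d) * K ρ n x y := by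
  unfold K
  rw [Fin.prod_univ_succ]
  simp [Fin.cons_zero, Fin.cons_succ]

lemma T_succ (ρ : ℝ) {n : ℕ} (g : (Fin (n+1) → Bool) → ℝ) (e : Bool) (x : Fin n → Bool) :
    T ρ (n+1) g (Fin.cons e x)
      = T ρ n (fun z => (g (Fin.cons true z) + g (Fin.cons false z))/2) x
        + ρ * sgn e * T ρ n (fun z => (g (Fin.cons true z) - g (Fin.cons false z))/2) x := by
  unfold T
  rw [sum_cube_succ (fun y => K ρ (n+1) (Fin.cons e x) y * g y)]
  rw [Finset.mul_sum, Finset.mul_sum, Finset.mul_sum, Finset.mul_sum, ← Finset.sum_add_distrib]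
  refine Finset.sum_congr rfl fun z _ => ?_
  rw [K_succ, K_succ]
  have he : sgn e * sgn e = 1 := by cases e <;> simp [sgn]
  cases e <;> simp [sgn] <;> ring

lemma choose_le (k : ℕ) : ∀ i, i ≤ k → Nat.choose (2*k) (2*i) ≤ Nat.choose k i * (2*k-1)^i := by
  intro i
  induction i with
  | zero => simp
  | succ i ih =>
    intro hik
    have hi : i ≤ k := le_of_lt (Nat.lt_of_lt_of_le (Nat.lt_succ_self i) hik)
    have H := ih hi
    have r1 : Nat.choose (2*k) (2*i+1) * (2*i+1) = Nat.choose (2*k) (2*i) * (2*k - 2*i) :=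
      Nat.choose_succ_right_eq (2*k) (2*i)
    have r2 : Nat.choose (2*k) (2*i+2) * (2*i+2) = Nat.choose (2*k) (2*i+1) * (2*k - (2*i+1)) :=
      Nat.choose_succ_right_eq (2*k) (2*i+1)
    have r3 : Nat.choose k (i+1) * (i+1) = Nat.choose k i * (k - i) :=
      Nat.choose_succ_right_eq k i
    have key : Nat.choose (2*k) (2*(i+1)) * ((2*i+1)*(2*i+2))
        ≤ (Nat.choose k (i+1) * (2*k-1)^(i+1)) * ((2*i+1)*(2*i+2)) := by
      have e1 : Nat.choose (2*k) (2*(i+1)) * ((2*i+1)*(2*i+2))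
          = Nat.choose (2*k) (2*i) * ((2*k - 2*i) * (2*k - (2*i+1))) := by
        have h20 : 2*(i+1) = 2*i+2 := by ring
        rw [h20]
        calc Nat.choose (2*k) (2*i+2) * ((2*i+1)*(2*i+2))
            = (Nat.choose (2*k) (2*i+2) * (2*i+2)) * (2*i+1) := by ring
          _ = (Nat.choose (2*k) (2*i+1) * (2*k - (2*i+1))) * (2*i+1) := by rw [r2]
          _ = (Nat.choose (2*k) (2*i+1) * (2*i+1)) * (2*k - (2*i+1)) := by ring
          _ = (Nat.choose (2*k) (2*i) * (2*k - 2*i)) * (2*k - (2*i+1)) := by rw [r1]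
          _ = _ := by ring
      have e2 : (Nat.choose k (i+1) * (2*k-1)^(i+1)) * ((2*i+1)*(2*i+2))
          = Nat.choose k i * (2*k-1)^i * ((k-i) * (2*k-1) * (2*(2*i+1))) := by
        calc (Nat.choose k (i+1) * (2*k-1)^(i+1)) * ((2*i+1)*(2*i+2))
            = (Nat.choose k (i+1) * (i+1)) * ((2*k-1)^(i+1) * (2*i+1) * 2) := by ring
          _ = (Nat.choose k i * (k-i)) * ((2*k-1)^(i+1) * (2*i+1) * 2) := by rw [r3]
          _ = _ := by rw [pow_succ]; ring
      rw [e1, e2]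
      have h3 : (2*k - 2*i) * (2*k - (2*i+1)) ≤ (k-i) * (2*k-1) * (2*(2*i+1)) := by
        have h2 : 2*k - 2*i = 2*(k-i) := by omega
        rw [h2]
        calc 2*(k-i) * (2*k - (2*i+1)) ≤ 2*(k-i) * ((2*k-1)*(2*i+1)) := by
              apply Nat.mul_le_mul_left
              calc 2*k - (2*i+1) ≤ 2*k-1 := by omega
                _ ≤ (2*k-1)*(2*i+1) := Nat.le_mul_of_pos_right _ (by omega)
          _ = (k-i) * (2*k-1) * (2*(2*i+1)) := by ring
      calc Nat.choose (2*k) (2*i) * ((2*k - 2*i) * (2*k - (2*i+1)))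
          ≤ (Nat.choose k i * (2*k-1)^i) * ((2*k - 2*i) * (2*k - (2*i+1))) :=
            Nat.mul_le_mul_right _ H
        _ ≤ Nat.choose k i * (2*k-1)^i * ((k-i) * (2*k-1) * (2*(2*i+1))) :=
            Nat.mul_le_mul_left _ h3
    exact Nat.le_of_mul_le_mul_right key (by positivity)

lemma choose_le' {k i : ℕ} (hik : i ≤ k) :
    Nat.choose (2*k) (2*i) ≤ Nat.choose k i * (2*k-1)^(k-i) := by
  have h1 : 2*i = 2*k - 2*(k-i) := by omega
  have h2 : 2*(k-i) ≤ 2*k := by omega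
  rw [h1, Nat.choose_symm h2]
  calc Nat.choose (2*k) (2*(k-i)) ≤ Nat.choose k (k-i) * (2*k-1)^(k-i) :=
        choose_le k (k-i) (by omega)
    _ = Nat.choose k i * (2*k-1)^(k-i) := by rw [Nat.choose_symm hik]

lemma twopoint {k : ℕ} (hk : 1 ≤ k) {ρ : ℝ} (hρ0 : 0 ≤ ρ)
    (hρ : ρ^2 * (2*(k:ℝ)-1) ≤ 1) (a b : ℝ) :
    ((a + ρ*b)^(2*k) + (a - ρ*b)^(2*k))/2 ≤ (a^2 + b^2)^k := by
  set c := ρ * b with hc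
  have h1 : (a+c)^(2*k) + (a-c)^(2*k)
      = ∑ j ∈ range (2*k+1), a^j * c^(2*k-j) * ((1 + (-1:ℝ)^(2*k-j)) * (Nat.choose (2*k) j)) := by
    have hsub : a - c = a + (-c) := by ring
    rw [add_pow, hsub, add_pow, ← Finset.sum_add_distrib]
    refine Finset.sum_congr rfl fun j _ => ?_
    rw [neg_pow]
    ring
  have h2 : ∑ j ∈ range (2*k+1), a^j * c^(2*k-j) * ((1 + (-1:ℝ)^(2*k-j)) * (Nat.choose (2*k) j))
      = ∑ i ∈ range (k+1), a^(2*i) * c^(2*k-2*i) * (2 * (Nat.choose (2*k) (2*i))) := by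
    rw [← Finset.sum_filter_add_sum_filter_not (range (2*k+1)) (fun j => Even j)]
    have hodd : ∑ j ∈ (range (2*k+1)).filter (fun j => ¬ Even j),
        a^j * c^(2*k-j) * ((1 + (-1:ℝ)^(2*k-j)) * (Nat.choose (2*k) j)) = 0 := by
      refine Finset.sum_eq_zero fun j hj => ?_
      simp only [Finset.mem_filter, Finset.mem_range] at hj
      obtain ⟨hj1, hj2⟩ := hj
      rw [Nat.not_even_iff_odd] at hj2
      obtain ⟨m, hm⟩ := hj2
      have hoddk : Odd (2*k - j) := ⟨k - m - 1, by omega⟩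
      rw [hoddk.neg_one_pow]
      ring
    rw [hodd, add_zero]
    refine Finset.sum_nbij' (fun j => j / 2) (fun i => 2 * i) ?_ ?_ ?_ ?_ ?_
    · intro j hj
      simp only [Finset.mem_filter, Finset.mem_range] at hj ⊢
      omega
    · intro i hi
      simp only [Finset.mem_filter, Finset.mem_range] at hi ⊢
      exact ⟨by omega, ⟨i, by ring⟩⟩
    · intro j hj
      simp only [Finset.mem_filter, Finset.mem_range] at hj
      obtain ⟨-, m, hm⟩ := hj
      show 2 * (j / 2) = j
      omega
    · intro i hi
      show (2 * i) / 2 = i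
      omega
    · intro j hj
      simp only [Finset.mem_filter, Finset.mem_range] at hj
      obtain ⟨-, m, hm⟩ := hj
      have heven : Even (2*k - j) := ⟨k - m, by omega⟩
      rw [heven.neg_one_pow]
      have h13 : 2 * (j/2) = j := by omega
      rw [h13]
      norm_num
  rw [h1, h2, add_pow, Finset.sum_div]
  refine Finset.sum_le_sum fun i hi => ?_
  simp only [Finset.mem_range] at hi
  have hik : i ≤ k := by omega
  have e1 : a^(2*i) * c^(2*k-2*i) * (2 * (Nat.choose (2*k) (2*i))) / 2
      = a^(2*i) * (ρ^(2*(k-i)) * (Nat.choose (2*k) (2*i))) * b^(2*(k-i)) := by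
    have h21 : 2*k - 2*i = 2*(k-i) := by omega
    rw [h21, hc, mul_pow]
    ring
  rw [e1]
  have e2 : (a^2)^i * (b^2)^(k-i) * ((Nat.choose k i : ℝ))
      = a^(2*i) * ((Nat.choose k i : ℝ)) * b^(2*(k-i)) := by
    rw [← pow_mul, ← pow_mul]
    ring_nf
  rw [e2]
  have key : ρ^(2*(k-i)) * (Nat.choose (2*k) (2*i) : ℝ) ≤ (Nat.choose k i : ℝ) := by
    have hcast : ((Nat.choose (2*k) (2*i) : ℕ) : ℝ)
        ≤ (Nat.choose k i : ℝ) * ((2*(k:ℝ)-1))^(k-i) := by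
      have hc1 := choose_le' hik
      have hcast2 : (((2*k-1 : ℕ)) : ℝ) = 2*(k:ℝ)-1 := by
        have h22 : 1 ≤ 2*k := by omega
        push_cast [Nat.cast_sub h22]
        ring
      calc ((Nat.choose (2*k) (2*i) : ℕ) : ℝ)
          ≤ ((Nat.choose k i * (2*k-1)^(k-i) : ℕ) : ℝ) := by exact_mod_cast hc1
        _ = (Nat.choose k i : ℝ) * ((2*(k:ℝ)-1))^(k-i) := by push_cast [hcast2]; ring
    have hnn : (0:ℝ) ≤ 2*(k:ℝ)-1 := by
      have h23 : (1:ℝ) ≤ (k:ℝ) := by exact_mod_cast hk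
      linarith
    calc ρ^(2*(k-i)) * (Nat.choose (2*k) (2*i) : ℝ)
        ≤ ρ^(2*(k-i)) * ((Nat.choose k i : ℝ) * ((2*(k:ℝ)-1))^(k-i)) :=
          mul_le_mul_of_nonneg_left hcast (pow_nonneg hρ0 _)
      _ = (Nat.choose k i : ℝ) * ((ρ^2 * (2*(k:ℝ)-1))^(k-i)) := by
          rw [mul_pow, pow_mul]
          ring
      _ ≤ (Nat.choose k i : ℝ) * 1 := by
          refine mul_le_mul_of_nonneg_left ?_ (Nat.cast_nonneg _)
          exact pow_le_one₀ (mul_nonneg (sq_nonneg ρ) hnn) hρ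
      _ = _ := by ring
  have ha : (0:ℝ) ≤ a^(2*i) := by rw [pow_mul]; positivity
  have hb : (0:ℝ) ≤ b^(2*(k-i)) := by rw [pow_mul]; positivity
  exact mul_le_mul_of_nonneg_right (mul_le_mul_of_nonneg_left key ha) hb

lemma minkowski_step {n k : ℕ} (hk : 1 ≤ k) (u v : (Fin n → Bool) → ℝ) {A B : ℝ}
    (hA : 0 ≤ A) (hB : 0 ≤ B)
    (hu : Ex n (fun x => (u x)^(2*k)) ≤ A^k) (hv : Ex n (fun x => (v x)^(2*k)) ≤ B^k) :
    Ex n (fun x => ((u x)^2 + (v x)^2)^k) ≤ (A+B)^k := by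
  have hw : (0:ℝ) < 1/2^n := by positivity
  have hkR : (1:ℝ) ≤ (k:ℝ) := by exact_mod_cast hk
  have hk0 : (k:ℝ) ≠ 0 := by positivity
  set W : ℝ := (1/2^n : ℝ)^((k:ℝ)⁻¹) with hW
  have hW0 : 0 < W := Real.rpow_pos_of_pos hw _
  have hWk : W^k = 1/2^n := by
    rw [← Real.rpow_natCast W k, hW, ← Real.rpow_mul hw.le, inv_mul_cancel₀ hk0,
      Real.rpow_one]
  set f : (Fin n → Bool) → ℝ := fun x => W * (u x)^2 with hf
  set g : (Fin n → Bool) → ℝ := fun x => W * (v x)^2 with hg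
  have hf0 : ∀ x ∈ (univ : Finset (Fin n → Bool)), 0 ≤ f x := fun x _ => by positivity
  have hg0 : ∀ x ∈ (univ : Finset (Fin n → Bool)), 0 ≤ g x := fun x _ => by positivity
  have hmink := Real.Lp_add_le_of_nonneg (s := univ) (f := f) (g := g) (p := (k:ℝ)) hkR hf0 hg0
  have conv1 : ∀ (h : (Fin n → Bool) → ℝ), (∀ x, 0 ≤ h x) →
      ∑ x, (h x)^((k:ℝ)) = ∑ x, (h x)^k := by
    intro h h0
    exact Finset.sum_congr rfl fun x _ => Real.rpow_natCast (h x) k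
  have e1 : ∑ x, (f x + g x)^((k:ℝ)) = ∑ x, ((1:ℝ)/2^n) * ((u x)^2 + (v x)^2)^k := by
    rw [conv1 _ (fun x => add_nonneg (hf0 x (mem_univ x)) (hg0 x (mem_univ x)))]
    refine Finset.sum_congr rfl fun x _ => ?_
    rw [hf, hg, ← mul_add, mul_pow, hWk]
  have e2 : ∑ x, (f x)^((k:ℝ)) = ∑ x, ((1:ℝ)/2^n) * (u x)^(2*k) := by
    rw [conv1 _ (fun x => hf0 x (mem_univ x))]
    refine Finset.sum_congr rfl fun x _ => ?_
    rw [hf, mul_pow, hWk, ← pow_mul]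
  have e3 : ∑ x, (g x)^((k:ℝ)) = ∑ x, ((1:ℝ)/2^n) * (v x)^(2*k) := by
    rw [conv1 _ (fun x => hg0 x (mem_univ x))]
    refine Finset.sum_congr rfl fun x _ => ?_
    rw [hg, mul_pow, hWk, ← pow_mul]
  rw [e1, e2, e3] at hmink
  have hsum_eq : ∀ (F : (Fin n → Bool) → ℝ), ∑ x, ((1:ℝ)/2^n) * F x = Ex n F := by
    intro F; rw [Ex, Finset.mul_sum]
  rw [hsum_eq, hsum_eq, hsum_eq] at hmink
  have hL0 : 0 ≤ Ex n (fun x => ((u x)^2 + (v x)^2)^k) :=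
    Ex_nonneg fun x => by positivity
  have hu0 : 0 ≤ Ex n (fun x => (u x)^(2*k)) :=
    Ex_nonneg fun x => by rw [pow_mul]; positivity
  have hv0 : 0 ≤ Ex n (fun x => (v x)^(2*k)) :=
    Ex_nonneg fun x => by rw [pow_mul]; positivity
  have step2 : (Ex n (fun x => (u x)^(2*k)))^((1:ℝ)/(k:ℝ)) ≤ A := by
    calc (Ex n (fun x => (u x)^(2*k)))^((1:ℝ)/(k:ℝ))
        ≤ (A^k)^((1:ℝ)/(k:ℝ)) := Real.rpow_le_rpow hu0 hu (by positivity)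
      _ = A := by
          rw [← Real.rpow_natCast A k, ← Real.rpow_mul hA, mul_one_div, div_self hk0,
            Real.rpow_one]
  have step3 : (Ex n (fun x => (v x)^(2*k)))^((1:ℝ)/(k:ℝ)) ≤ B := by
    calc (Ex n (fun x => (v x)^(2*k)))^((1:ℝ)/(k:ℝ))
        ≤ (B^k)^((1:ℝ)/(k:ℝ)) := Real.rpow_le_rpow hv0 hv (by positivity)
      _ = B := by
          rw [← Real.rpow_natCast B k, ← Real.rpow_mul hB, mul_one_div, div_self hk0,
            Real.rpow_one]
  have final : (Ex n (fun x => ((u x)^2 + (v x)^2)^k))^((1:ℝ)/(k:ℝ)) ≤ A + B :=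
    le_trans hmink (add_le_add step2 step3)
  calc Ex n (fun x => ((u x)^2 + (v x)^2)^k)
      = ((Ex n (fun x => ((u x)^2 + (v x)^2)^k))^((1:ℝ)/(k:ℝ)))^(k:ℕ) := by
        rw [← Real.rpow_natCast _ k, ← Real.rpow_mul hL0, one_div,
          inv_mul_cancel₀ hk0, Real.rpow_one]
    _ ≤ (A+B)^k := pow_le_pow_left₀ (Real.rpow_nonneg hL0 _) final k

theorem hyper {k : ℕ} (hk : 1 ≤ k) {ρ : ℝ} (hρ0 : 0 ≤ ρ)
    (hρ : ρ^2 * (2*(k:ℝ)-1) ≤ 1) :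
    ∀ (n : ℕ) (g : (Fin n → Bool) → ℝ),
      Ex n (fun x => (T ρ n g x)^(2*k)) ≤ (Ex n (fun x => (g x)^2))^k := by
  intro n
  induction n with
  | zero =>
    intro g
    have hEx : ∀ f : (Fin 0 → Bool) → ℝ, Ex 0 f = f default := by
      intro f
      rw [Ex]
      simp
      exact congrArg f (Subsingleton.elim _ _)
    have hT : T (ρ) 0 g default = g default := by
      rw [T]
      simp [K]
      exact congrArg g (Subsingleton.elim _ _)
    rw [hEx, hEx, hT, ← pow_mul]
  | succ n IH =>
    intro g
    set A := fun z : Fin n → Bool => (g (Fin.cons true z) + g (Fin.cons false z))/2 with hA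
    set Bf := fun z : Fin n → Bool => (g (Fin.cons true z) - g (Fin.cons false z))/2 with hBf
    have point : ∀ x, (((T ρ (n+1) g (Fin.cons true x))^(2*k))
          + ((T ρ (n+1) g (Fin.cons false x))^(2*k)))/2
        ≤ ((T ρ n A x)^2 + (T ρ n Bf x)^2)^k := by
      intro x
      rw [T_succ, T_succ, sgn_true, sgn_false]
      rw [show T ρ n A x + ρ * 1 * T ρ n Bf x = T ρ n A x + ρ * T ρ n Bf x from by ring]
      rw [show T ρ n A x + ρ * (-1) * T ρ n Bf x = T ρ n A x - ρ * T ρ n Bf x from by ring]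
      exact twopoint hk hρ0 hρ _ _
    rw [Ex_succ (fun x => (T ρ (n+1) g x)^(2*k))]
    refine le_trans (Ex_mono point) ?_
    have hA0 : 0 ≤ Ex n (fun z => (A z)^2) := Ex_nonneg fun z => sq_nonneg _
    have hB0 : 0 ≤ Ex n (fun z => (Bf z)^2) := Ex_nonneg fun z => sq_nonneg _
    refine le_trans (minkowski_step hk (T ρ n A) (T ρ n Bf) hA0 hB0 (IH A) (IH Bf)) ?_
    have hgsq : Ex n (fun z => (A z)^2) + Ex n (fun z => (Bf z)^2)
        = Ex (n+1) (fun x => (g x)^2) := by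
      rw [Ex_succ (fun x => (g x)^2), ← Ex_add]
      refine congrArg _ (funext fun z => ?_)
      simp only [hA, hBf]
      ring
    rw [hgsq]
lemma scalar_id (ρ : ℝ) (n : ℕ) (x : Fin n → Bool) (i : Fin n) :
    ∑ y : Fin n → Bool, K ρ n x y * sgn (y i) = 2^n * (ρ * sgn (x i)) := by
  have hfac : ∀ y : Fin n → Bool, K ρ n x y * sgn (y i)
      = ∏ j, ((1 + ρ * sgn (x j) * sgn (y j)) * (if j = i then sgn (y j) else 1)) := by
    intro y
    rw [Finset.prod_mul_distrib]
    congr 1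
    simp
  calc ∑ y : Fin n → Bool, K ρ n x y * sgn (y i)
      = ∑ y : Fin n → Bool, ∏ j, ((1 + ρ * sgn (x j) * sgn (y j))
          * (if j = i then sgn (y j) else 1)) := Finset.sum_congr rfl fun y _ => hfac y
    _ = ∏ j, ∑ t : Bool, ((1 + ρ * sgn (x j) * sgn t) * (if j = i then sgn t else 1)) := by
        rw [Fintype.prod_sum (κ := fun _ : Fin n => Bool)
          (f := fun j t => (1 + ρ * sgn (x j) * sgn t) * (if j = i then sgn t else 1))]
    _ = ∏ j, (2 * (if j = i then ρ * sgn (x i) else 1)) := by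
        refine Finset.prod_congr rfl fun j _ => ?_
        rw [Fintype.sum_bool]
        by_cases hj : j = i
        · subst hj
          cases x j <;> simp [sgn] <;> ring
        · simp only [if_neg hj]
          cases x j <;> simp [sgn] <;> ring
    _ = 2^n * (ρ * sgn (x i)) := by
        rw [Finset.prod_mul_distrib, Finset.prod_const]
        simp
section Vector
variable {B : Type} [NormedAddCommGroup B] [NormedSpace ℝ B]

lemma T_dominates {ρ : ℝ} (hρ0 : 0 ≤ ρ) (hρ1 : ρ ≤ 1) {n : ℕ}
    (b : Fin n → B) (x : Fin n → Bool) :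
    ρ * ‖∑ i, sgn (x i) • b i‖ ≤ T ρ n (fun y => ‖∑ i, sgn (y i) • b i‖) x := by
  set S : (Fin n → Bool) → B := fun y => ∑ i, sgn (y i) • b i with hS
  have id1 : ∑ y, ((1/2^n : ℝ) * K ρ n x y) • S y = ρ • S x := by
    calc ∑ y, ((1/2^n : ℝ) * K ρ n x y) • S y
        = ∑ y, ∑ i, (((1/2^n : ℝ) * K ρ n x y) * sgn (y i)) • b i := by
          refine Finset.sum_congr rfl fun y _ => ?_
          rw [hS, Finset.smul_sum]
          refine Finset.sum_congr rfl fun i _ => ?_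
          rw [smul_smul]
      _ = ∑ i, ∑ y, (((1/2^n : ℝ) * K ρ n x y) * sgn (y i)) • b i := Finset.sum_comm
      _ = ∑ i, (∑ y, ((1/2^n : ℝ) * K ρ n x y) * sgn (y i)) • b i := by
          refine Finset.sum_congr rfl fun i _ => ?_
          rw [Finset.sum_smul]
      _ = ∑ i, (ρ * sgn (x i)) • b i := by
          refine Finset.sum_congr rfl fun i _ => ?_
          congr 1
          have h1 : ∑ y, ((1/2^n : ℝ) * K ρ n x y) * sgn (y i)
              = (1/2^n : ℝ) * ∑ y, K ρ n x y * sgn (y i) := by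
            rw [Finset.mul_sum]
            exact Finset.sum_congr rfl fun y _ => by ring
          rw [h1, scalar_id]
          have : (2:ℝ)^n ≠ 0 := by positivity
          field_simp
      _ = ρ • S x := by
          rw [hS, Finset.smul_sum]
          refine Finset.sum_congr rfl fun i _ => ?_
          rw [smul_smul]
  have : ρ * ‖S x‖ = ‖ρ • S x‖ := by
    rw [norm_smul, Real.norm_eq_abs, abs_of_nonneg hρ0]
  rw [this, ← id1]
  calc ‖∑ y, ((1/2^n : ℝ) * K ρ n x y) • S y‖
      ≤ ∑ y, ‖((1/2^n : ℝ) * K ρ n x y) • S y‖ := norm_sum_le _ _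
    _ = ∑ y, ((1/2^n : ℝ) * K ρ n x y) * ‖S y‖ := by
        refine Finset.sum_congr rfl fun y _ => ?_
        rw [norm_smul, Real.norm_eq_abs, abs_of_nonneg]
        have hw : (0:ℝ) ≤ 1/2^n := by positivity
        exact mul_nonneg hw (K_nonneg hρ0 hρ1 n x y)
    _ = T ρ n (fun y => ‖S y‖) x := by
        rw [T, Finset.mul_sum]
        exact Finset.sum_congr rfl fun y _ => by ring

lemma moment_2k {k : ℕ} (hk : 1 ≤ k) {n : ℕ} (b : Fin n → B) :
    Ex n (fun x => ‖∑ i, sgn (x i) • b i‖^(2*k))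
      ≤ (2*(k:ℝ)-1)^k * (Ex n (fun x => ‖∑ i, sgn (x i) • b i‖^2))^k := by
  set Z : (Fin n → Bool) → ℝ := fun x => ‖∑ i, sgn (x i) • b i‖ with hZ
  have hkR : (1:ℝ) ≤ (k:ℝ) := by exact_mod_cast hk
  have hm1 : (1:ℝ) ≤ 2*(k:ℝ)-1 := by linarith
  have hm0 : (0:ℝ) < 2*(k:ℝ)-1 := by linarith
  set ρ : ℝ := 1 / Real.sqrt (2*(k:ℝ)-1) with hρdef
  have hs1 : 1 ≤ Real.sqrt (2*(k:ℝ)-1) := by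
    have := Real.sqrt_le_sqrt hm1
    rwa [Real.sqrt_one] at this
  have hs0 : 0 < Real.sqrt (2*(k:ℝ)-1) := lt_of_lt_of_le one_pos hs1
  have hρ0 : 0 ≤ ρ := by positivity
  have hρ1 : ρ ≤ 1 := by
    rw [hρdef, div_le_one hs0]
    exact hs1
  have hρsq : ρ^2 = 1/(2*(k:ℝ)-1) := by
    rw [hρdef, div_pow, one_pow, Real.sq_sqrt hm0.le]
  have hρc : ρ^2 * (2*(k:ℝ)-1) ≤ 1 := by
    rw [hρsq]
    field_simp
    exact le_refl _
  have hpoint : ∀ x, (ρ * Z x)^(2*k) ≤ (T ρ n Z x)^(2*k) := by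
    intro x
    exact pow_le_pow_left₀ (mul_nonneg hρ0 (norm_nonneg _)) (T_dominates hρ0 hρ1 b x) _
  have hchain : Ex n (fun x => (ρ * Z x)^(2*k)) ≤ (Ex n (fun x => (Z x)^2))^k :=
    le_trans (Ex_mono hpoint) (hyper hk hρ0 hρc n Z)
  have hexp : Ex n (fun x => (ρ * Z x)^(2*k)) = ρ^(2*k) * Ex n (fun x => (Z x)^(2*k)) := by
    rw [Ex, Ex, Finset.mul_sum, Finset.mul_sum, Finset.mul_sum]
    refine Finset.sum_congr rfl fun x _ => ?_
    rw [mul_pow]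
    ring
  rw [hexp] at hchain
  have hρ2k : ρ^(2*k) = (1/(2*(k:ℝ)-1))^k := by
    rw [pow_mul, hρsq]
  rw [hρ2k] at hchain
  have hpos : (0:ℝ) < (1/(2*(k:ℝ)-1))^k := by positivity
  calc Ex n (fun x => (Z x)^(2*k))
      = ((2*(k:ℝ)-1)^k * (1/(2*(k:ℝ)-1))^k) * Ex n (fun x => (Z x)^(2*k)) := by
        rw [← mul_pow]
        field_simp
        rw [one_pow, mul_one]
    _ = (2*(k:ℝ)-1)^k * ((1/(2*(k:ℝ)-1))^k * Ex n (fun x => (Z x)^(2*k))) := by ring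
    _ ≤ (2*(k:ℝ)-1)^k * (Ex n (fun x => (Z x)^2))^k := by
        refine mul_le_mul_of_nonneg_left hchain (by positivity)
end Vector
lemma holder_23 {n : ℕ} (Z : (Fin n → Bool) → ℝ) (hZ : ∀ x, 0 ≤ Z x) :
    Ex n (fun x => Z x^2) ≤ (Ex n Z)^((2:ℝ)/3) * (Ex n (fun x => Z x^4))^((1:ℝ)/3) := by
  have hw : (0:ℝ) < 1/2^n := by positivity
  set w : ℝ := 1/2^n with hwdef
  set f : (Fin n → Bool) → ℝ := fun x => (w * Z x)^((2:ℝ)/3) with hf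
  set g : (Fin n → Bool) → ℝ := fun x => w^((1:ℝ)/3) * (Z x)^((4:ℝ)/3) with hg
  have hpq : Real.HolderConjugate (3/2) 3 := Real.holderConjugate_iff.mpr ⟨by norm_num, by norm_num⟩
  have hf0 : ∀ x ∈ (univ : Finset (Fin n → Bool)), 0 ≤ f x := fun x _ =>
    Real.rpow_nonneg (mul_nonneg hw.le (hZ x)) _
  have hg0 : ∀ x ∈ (univ : Finset (Fin n → Bool)), 0 ≤ g x := fun x _ =>
    mul_nonneg (Real.rpow_nonneg hw.le _) (Real.rpow_nonneg (hZ x) _)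
  have H := Real.inner_le_Lp_mul_Lq_of_nonneg univ hpq hf0 hg0
  have e_fg : ∀ x, f x * g x = w * Z x^2 := by
    intro x
    simp only [hf, hg]
    rw [Real.mul_rpow hw.le (hZ x)]
    have h1 : w^((2:ℝ)/3) * (Z x)^((2:ℝ)/3) * (w^((1:ℝ)/3) * (Z x)^((4:ℝ)/3))
        = (w^((2:ℝ)/3) * w^((1:ℝ)/3)) * ((Z x)^((2:ℝ)/3) * (Z x)^((4:ℝ)/3)) := by ring
    rw [h1, ← Real.rpow_add hw]
    rw [← Real.rpow_add' (hZ x) (by norm_num : (2:ℝ)/3 + 4/3 ≠ 0)]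
    norm_num
  have e_f : ∀ x, (f x)^((3:ℝ)/2) = w * Z x := by
    intro x
    simp only [hf]
    rw [← Real.rpow_mul (mul_nonneg hw.le (hZ x))]
    norm_num
  have e_g : ∀ x, (g x)^((3:ℝ)) = w * Z x^4 := by
    intro x
    simp only [hg]
    rw [Real.mul_rpow (Real.rpow_nonneg hw.le _) (Real.rpow_nonneg (hZ x) _),
      ← Real.rpow_mul hw.le, ← Real.rpow_mul (hZ x)]
    norm_num
  have s1 : ∑ x, f x * g x = Ex n (fun x => Z x^2) := by
    rw [Ex, Finset.mul_sum]
    exact Finset.sum_congr rfl fun x _ => e_fg x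
  have s2 : ∑ x, (f x)^((3:ℝ)/2) = Ex n Z := by
    rw [Ex, Finset.mul_sum]
    exact Finset.sum_congr rfl fun x _ => e_f x
  have s3 : ∑ x, (g x)^((3:ℝ)) = Ex n (fun x => Z x^4) := by
    rw [Ex, Finset.mul_sum]
    exact Finset.sum_congr rfl fun x _ => e_g x
  rw [s1, s2, s3] at H
  calc Ex n (fun x => Z x^2)
      ≤ (Ex n Z)^((1:ℝ)/(3/2)) * (Ex n (fun x => Z x^4))^((1:ℝ)/3) := H
    _ = (Ex n Z)^((2:ℝ)/3) * (Ex n (fun x => Z x^4))^((1:ℝ)/3) := by norm_num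

lemma L2_le_L1 {n : ℕ} (Z : (Fin n → Bool) → ℝ) (hZ : ∀ x, 0 ≤ Z x)
    (h4 : Ex n (fun x => Z x^4) ≤ 9 * (Ex n (fun x => Z x^2))^2) :
    Ex n (fun x => Z x^2) ≤ 9 * (Ex n Z)^2 := by
  set t := Ex n (fun x => Z x^2) with ht
  have ht0 : 0 ≤ t := Ex_nonneg fun x => sq_nonneg _
  rcases eq_or_lt_of_le ht0 with h | h
  · rw [← h]
    positivity
  · have hE0 : 0 ≤ Ex n Z := Ex_nonneg hZ
    have h40 : 0 ≤ Ex n (fun x => Z x^4) := Ex_nonneg fun x => by positivity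
    have hH := holder_23 Z hZ
    have step : t ≤ (Ex n Z)^((2:ℝ)/3) * (9^((1:ℝ)/3) * t^((2:ℝ)/3)) := by
      refine le_trans hH ?_
      refine mul_le_mul_of_nonneg_left ?_ (Real.rpow_nonneg hE0 _)
      calc (Ex n (fun x => Z x^4))^((1:ℝ)/3)
          ≤ (9 * t^2)^((1:ℝ)/3) := Real.rpow_le_rpow h40 h4 (by norm_num)
        _ = 9^((1:ℝ)/3) * t^((2:ℝ)/3) := by
            rw [Real.mul_rpow (by norm_num) (sq_nonneg t), ← Real.rpow_natCast t 2,
              ← Real.rpow_mul ht0]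
            norm_num
    have hcube : t^((1:ℝ)/3) ≤ 9^((1:ℝ)/3) * (Ex n Z)^((2:ℝ)/3) := by
      have ht23 : (0:ℝ) < t^((2:ℝ)/3) := Real.rpow_pos_of_pos h _
      have e : t = t^((1:ℝ)/3) * t^((2:ℝ)/3) := by
        rw [← Real.rpow_add h]
        norm_num
      have step2 : t^((1:ℝ)/3) * t^((2:ℝ)/3)
          ≤ (9^((1:ℝ)/3) * (Ex n Z)^((2:ℝ)/3)) * t^((2:ℝ)/3) := by
        calc t^((1:ℝ)/3) * t^((2:ℝ)/3)
            = t := e.symm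
          _ ≤ (Ex n Z)^((2:ℝ)/3) * (9^((1:ℝ)/3) * t^((2:ℝ)/3)) := step
          _ = (9^((1:ℝ)/3) * (Ex n Z)^((2:ℝ)/3)) * t^((2:ℝ)/3) := by ring
      exact le_of_mul_le_mul_right step2 ht23
    have final : t ≤ (9^((1:ℝ)/3) * (Ex n Z)^((2:ℝ)/3))^(3:ℕ) := by
      have e : t = (t^((1:ℝ)/3))^(3:ℕ) := by
        rw [← Real.rpow_natCast (t^((1:ℝ)/3)) 3, ← Real.rpow_mul ht0]
        norm_num
      rw [e]
      exact pow_le_pow_left₀ (Real.rpow_nonneg ht0 _) hcube 3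
    refine le_trans final (le_of_eq ?_)
    rw [mul_pow, ← Real.rpow_natCast (9^((1:ℝ)/3)) 3, ← Real.rpow_natCast ((Ex n Z)^((2:ℝ)/3)) 3,
      ← Real.rpow_mul (by norm_num : (0:ℝ) ≤ 9), ← Real.rpow_mul hE0]
    norm_num
theorem kahane {p : ℝ} (hp : 1 ≤ p) {B : Type} [NormedAddCommGroup B] [NormedSpace ℝ B]
    {n : ℕ} (b : Fin n → B) :
    Ex n (fun x => ‖∑ i, sgn (x i) • b i‖ ^ p)
      ≤ (9*(2*((⌈p⌉₊:ℕ):ℝ)-1))^(p/2) * (Ex n (fun x => ‖∑ i, sgn (x i) • b i‖)) ^ p := by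
  set Z : (Fin n → Bool) → ℝ := fun x => ‖∑ i, sgn (x i) • b i‖ with hZdef
  have hZ0 : ∀ x, 0 ≤ Z x := fun x => norm_nonneg _
  set k : ℕ := ⌈p⌉₊ with hkdef
  have hp0 : (0:ℝ) < p := lt_of_lt_of_le one_pos hp
  have hk1 : 1 ≤ k := Nat.one_le_ceil_iff.2 hp0
  have hkR : (1:ℝ) ≤ (k:ℝ) := by exact_mod_cast hk1
  have hpk : p ≤ (k:ℝ) := Nat.le_ceil p
  have hkne : (k:ℝ) ≠ 0 := by positivity
  have hm0 : (0:ℝ) < 2*(k:ℝ)-1 := by linarith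
  have hE0 : 0 ≤ Ex n Z := Ex_nonneg hZ0
  have hE20 : 0 ≤ Ex n (fun x => Z x^2) := Ex_nonneg fun x => sq_nonneg _
  -- fourth moment bound and L2 comparison
  have h4 : Ex n (fun x => Z x^4) ≤ 9 * (Ex n (fun x => Z x^2))^2 := by
    have h := moment_2k (k := 2) (by norm_num) b
    have e1 : 2*2 = 4 := by norm_num
    rw [e1] at h
    have e2 : (2*((2:ℕ):ℝ)-1)^2 = 9 := by norm_num
    rw [e2] at h
    exact h
  have h2 : Ex n (fun x => Z x^2) ≤ 9 * (Ex n Z)^2 := L2_le_L1 Z hZ0 h4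
  -- 2k-th moment bound
  have h2k : Ex n (fun x => Z x^(2*k)) ≤ (2*(k:ℝ)-1)^k * (Ex n (fun x => Z x^2))^k :=
    moment_2k hk1 b
  have hcomb : Ex n (fun x => Z x^(2*k)) ≤ ((9*(2*(k:ℝ)-1))^k) * (Ex n Z)^(2*k) := by
    calc Ex n (fun x => Z x^(2*k))
        ≤ (2*(k:ℝ)-1)^k * (Ex n (fun x => Z x^2))^k := h2k
      _ ≤ (2*(k:ℝ)-1)^k * (9 * (Ex n Z)^2)^k := by
          refine mul_le_mul_of_nonneg_left (pow_le_pow_left₀ hE20 h2 k) (by positivity)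
      _ = ((9*(2*(k:ℝ)-1))^k) * (Ex n Z)^(2*k) := by
          rw [mul_pow, mul_pow, ← pow_mul]
          ring_nf
  -- power mean: E Z^p ≤ (E Z^{2k})^{p/(2k)}
  set q : ℝ := (2*(k:ℝ))/p with hqdef
  have hq1 : 1 ≤ q := by
    rw [hqdef, le_div_iff₀ hp0]
    linarith
  have hq0 : (0:ℝ) < q := lt_of_lt_of_le one_pos hq1
  have hpq : p * q = 2*(k:ℝ) := by
    rw [hqdef]
    field_simp
  have hw' : ∑ _x : Fin n → Bool, ((1:ℝ)/2^n) = 1 := by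
    rw [Finset.sum_const, Finset.card_univ]
    simp [Fintype.card_fun]
  have J := Real.rpow_arith_mean_le_arith_mean_rpow univ (fun _ : Fin n → Bool => (1:ℝ)/2^n)
    (fun x => Z x ^ p) (fun i _ => by positivity) hw'
    (fun x _ => Real.rpow_nonneg (hZ0 x) p) hq1
  have jz : ∀ x : Fin n → Bool, (Z x ^ p) ^ q = Z x ^ (2*k) := by
    intro x
    rw [← Real.rpow_natCast (Z x) (2*k), ← Real.rpow_mul (hZ0 x), hpq]
    push_cast
    ring_nf
  have jsum : ∀ F : (Fin n → Bool) → ℝ, ∑ x, ((1:ℝ)/2^n) * F x = Ex n F := by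
    intro F
    rw [Ex, Finset.mul_sum]
  have jrw : (∑ x : Fin n → Bool, ((1:ℝ)/2^n) * (Z x ^ p) ^ q)
      = Ex n (fun x => Z x ^ (2*k)) := by
    rw [← jsum]
    exact Finset.sum_congr rfl fun x _ => by rw [jz]
  rw [jrw, jsum (fun x => Z x ^ p)] at J
  -- J : (Ex n Z^p)^q ≤ Ex n Z^{2k}
  have hEp0 : 0 ≤ Ex n (fun x => Z x ^ p) := Ex_nonneg fun x => Real.rpow_nonneg (hZ0 x) p
  have hE2k0 : 0 ≤ Ex n (fun x => Z x ^ (2*k)) :=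
    Ex_nonneg fun x => by rw [pow_mul]; positivity
  have hpm : Ex n (fun x => Z x ^ p) ≤ (Ex n (fun x => Z x ^ (2*k)))^(1/q) := by
    calc Ex n (fun x => Z x ^ p)
        = ((Ex n (fun x => Z x ^ p))^q)^(1/q) := by
          rw [← Real.rpow_mul hEp0, mul_one_div, div_self (ne_of_gt hq0), Real.rpow_one]
      _ ≤ (Ex n (fun x => Z x ^ (2*k)))^(1/q) :=
          Real.rpow_le_rpow (Real.rpow_nonneg hEp0 _) J (by positivity)
  have h1q : 1/q = p/(2*(k:ℝ)) := by
    rw [hqdef]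
    field_simp
  -- final computation
  have hfin : (Ex n (fun x => Z x ^ (2*k)))^(1/q)
      ≤ (9*(2*(k:ℝ)-1))^(p/2) * (Ex n Z) ^ p := by
    rw [h1q]
    calc (Ex n (fun x => Z x ^ (2*k)))^(p/(2*(k:ℝ)))
        ≤ (((9*(2*(k:ℝ)-1))^k) * (Ex n Z)^(2*k))^(p/(2*(k:ℝ))) :=
          Real.rpow_le_rpow hE2k0 hcomb (by positivity)
      _ = (9*(2*(k:ℝ)-1))^(p/2) * (Ex n Z) ^ p := by
          rw [Real.mul_rpow (by positivity) (by positivity)]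
          congr 1
          · rw [← Real.rpow_natCast (9*(2*(k:ℝ)-1)) k, ← Real.rpow_mul (by positivity)]
            congr 1
            field_simp
          · rw [← Real.rpow_natCast (Ex n Z) (2*k), ← Real.rpow_mul hE0]
            congr 1
            push_cast
            field_simp
  exact le_trans hpm hfin


end KK

open KK in
/-- **Khinchine–Kahane inequality** (Szarek-style).  For every `p ≥ 1` there is a constant
`C_p`, independent of the dimension `n`, of the normed space `B` and of the vectors `bᵢ`,
such that for i.i.d. Rademacher signs `X₁, …, Xₙ` (uniform on `{-1,1}ⁿ`),
`E[‖∑ᵢ bᵢ Xᵢ‖ ^ p] ≤ C_p * (E[‖∑ᵢ bᵢ Xᵢ‖]) ^ p`. -/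
theorem stmt0 (p : ℝ) (hp : 1 ≤ p) :
    ∃ C : ℝ, 0 < C ∧
      ∀ (B : Type) [NormedAddCommGroup B] [NormedSpace ℝ B],
        ∀ (n : ℕ), 2 ≤ n → ∀ (b : Fin n → B),
          (1 / 2 ^ n : ℝ) * ∑ x : Fin n → Bool,
              ‖∑ i, (if x i then (1 : ℝ) else -1) • b i‖ ^ p
            ≤ C * ((1 / 2 ^ n : ℝ) * ∑ x : Fin n → Bool,
              ‖∑ i, (if x i then (1 : ℝ) else -1) • b i‖) ^ p := by
  have hp0 : (0:ℝ) < p := lt_of_lt_of_le one_pos hp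
  have hk1 : 1 ≤ ⌈p⌉₊ := Nat.one_le_ceil_iff.2 hp0
  have hkR : (1:ℝ) ≤ ((⌈p⌉₊:ℕ):ℝ) := by exact_mod_cast hk1
  refine ⟨(9*(2*((⌈p⌉₊:ℕ):ℝ)-1))^(p/2), Real.rpow_pos_of_pos (by linarith) _, ?_⟩
  intro B _ _ n _ b
  have h := KK.kahane hp (B := B) (n := n) b
  simpa only [KK.Ex, KK.sgn] using h
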